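/- Let K be an algebraically closed field of characteristic 2 and n ∈ ℕ. Then the set {PQ + P^T Q^T : P, Q ∈ gl_n(K)} is Zariski-dense in the space sl_n(K) of trace-zero n×n matrices. In particular, a polynomial function on gl_n vanishing on all matrices of the form PQ + P^TQ^T vanishes on all of sl_n. -/

import Mathlib

open Matrix

/-- An upper-triangular matrix with pairwise distinct diagonal entries is
diagonalizable, over any field. -/
lemma exists_conj_diagonal {F : Type*} [Field F] {n : ℕ}
    (B : Matrix (Fin n) (Fin n) F) (d : Fin n → F) (hd : Function.Injective d)
    (hut : ∀ i j : Fin n, j < i → B i j = 0) (hdiag : ∀ i, B i i = d i) :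
    ∃ U : Matrix (Fin n) (Fin n) F, IsUnit U ∧ B * U = U * Matrix.diagonal d := by
  -- eigenvectors
  have hev : ∀ k : Fin n, ∃ v : Fin n → F, v ≠ 0 ∧ B.mulVec v = d k • v := by
    intro k
    have hdet : (B - d k • (1 : Matrix (Fin n) (Fin n) F)).det = 0 := by
      have hbt : (B - d k • (1 : Matrix (Fin n) (Fin n) F)).BlockTriangular id := by
        intro i j hij
        simp only [Matrix.sub_apply, Matrix.smul_apply, Matrix.one_apply, smul_eq_mul]
        have hne : i ≠ j := fun h => absurd (h ▸ hij) (lt_irrefl _)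
        rw [hut i j hij, if_neg hne]
        simp
      rw [Matrix.det_of_upperTriangular hbt]
      refine Finset.prod_eq_zero (Finset.mem_univ k) ?_
      simp [hdiag k]
    obtain ⟨v, hv0, hv⟩ := (Matrix.exists_mulVec_eq_zero_iff).mpr hdet
    refine ⟨v, hv0, ?_⟩
    have := hv
    rw [Matrix.sub_mulVec] at this
    have h1 : (d k • (1 : Matrix (Fin n) (Fin n) F)).mulVec v = d k • v := by
      rw [Matrix.smul_mulVec, Matrix.one_mulVec]
    rw [h1] at this
    exact sub_eq_zero.mp this
  choose v hv0 hv using hev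
  cases isEmpty_or_nonempty (Fin n) with
  | inl h => exact ⟨1, isUnit_one, Subsingleton.elim _ _⟩
  | inr h => ?_
  -- linear independence
  have hli : LinearIndependent F v := by
    apply Module.End.eigenvectors_linearIndependent' (Matrix.mulVecLin B) d hd v
    intro k
    constructor
    · rw [Module.End.mem_eigenspace_iff]
      simpa using hv k
    · exact hv0 k
  have hcard : Fintype.card (Fin n) = Module.finrank F (Fin n → F) := by
    simp
  let bas := basisOfLinearIndependentOfCardEqFinrank hli hcard
  have hbas : ⇑bas = v := coe_basisOfLinearIndependentOfCardEqFinrank hli hcard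
  let U := (Pi.basisFun F (Fin n)).toMatrix ⇑bas
  have hU : ∀ i k, U i k = v k i := by
    intro i k
    simp [U, Module.Basis.toMatrix, hbas]
  have : Invertible U := (Pi.basisFun F (Fin n)).invertibleToMatrix bas
  refine ⟨U, isUnit_of_invertible U, ?_⟩
  ext i k
  rw [Matrix.mul_apply, Matrix.mul_diagonal]
  have : ∑ j, B i j * U j k = (B.mulVec (v k)) i := by
    simp [Matrix.mulVec, dotProduct, hU]
  rw [this, hv k, hU]
  simp [mul_comm]

lemma key_construction {F : Type*} [Field F] {m : ℕ}
    (htwo : ∀ a : F, a + a = 0)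
    (X : Matrix (Fin (m+1)) (Fin (m+1)) F) (htr : X.trace = 0)
    (hV : IsUnit ((Matrix.of (fun i k => (X ^ (k : ℕ)) i 0) :
      Matrix (Fin (m+1)) (Fin (m+1)) F).det))
    (d : Fin (m+1) → F) (hd : Function.Injective d) :
    ∃ P Q : Matrix (Fin (m+1)) (Fin (m+1)) F, X = P * Q + Pᵀ * Qᵀ := by
  set V : Matrix (Fin (m+1)) (Fin (m+1)) F :=
    Matrix.of (fun i k => (X ^ (k : ℕ)) i 0) with hVdef
  haveI : Invertible V := V.invertibleOfIsUnitDet hV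
  set C : Matrix (Fin (m+1)) (Fin (m+1)) F := ⅟V * X * V with hCdef
  have hne_succ : ∀ j : Fin (m+1), j ≠ Fin.last m → j ≠ j + 1 := by
    intro j hj h
    have h1 : j < j + 1 := Fin.lt_add_one_iff.mpr (Fin.lt_last_iff_ne_last.mpr hj)
    rw [← h] at h1
    exact lt_irrefl _ h1
  -- columns of C
  have hXV : ∀ (j : Fin (m+1)), j ≠ Fin.last m → ∀ i, (X * V) i j = V i (j + 1) := by
    intro j hj i
    have hjv : ((j + 1 : Fin (m+1)) : ℕ) = (j : ℕ) + 1 :=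
      Fin.val_add_one_of_lt (Fin.lt_last_iff_ne_last.mpr hj)
    have h1 : (X * V) i j = (X * X ^ (j : ℕ)) i 0 := by
      simp [Matrix.mul_apply, hVdef]
    rw [h1, ← pow_succ', hVdef]
    simp [hjv]
  have hCcol : ∀ (j : Fin (m+1)), j ≠ Fin.last m → ∀ i,
      C i j = if i = j + 1 then 1 else 0 := by
    intro j hj i
    have h1 : C i j = (⅟V * (X * V)) i j := by rw [hCdef, Matrix.mul_assoc]
    rw [h1, Matrix.mul_apply]
    rw [Finset.sum_congr rfl (fun t _ => by rw [hXV j hj t])]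
    rw [show (∑ t, ⅟V i t * V t (j + 1)) = (⅟V * V) i (j+1) from
      (Matrix.mul_apply).symm]
    rw [invOf_mul_self]
    simp [Matrix.one_apply]
  -- trace of C and the corner entry
  have htrC : C.trace = 0 := by
    rw [hCdef, Matrix.trace_mul_cycle, mul_invOf_self, Matrix.one_mul, htr]
  have hClast : C (Fin.last m) (Fin.last m) = 0 := by
    have hsum : C.trace = ∑ j : Fin (m+1), C j j := rfl
    rw [Fin.sum_univ_castSucc] at hsum
    have hz : ∀ j : Fin m, C j.castSucc j.castSucc = 0 := by
      intro j
      have hne : j.castSucc ≠ Fin.last m := (Fin.castSucc_lt_last j).ne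
      rw [hCcol _ hne, if_neg (hne_succ _ hne)]
    rw [Finset.sum_congr rfl (fun j _ => hz j), Finset.sum_const_zero, zero_add] at hsum
    rw [← hsum, htrC]
  -- the matrix A
  set A : Matrix (Fin (m+1)) (Fin (m+1)) F := Matrix.of (fun i j =>
    (if i = j then d i else 0) + (if j ≠ Fin.last m ∧ i = j + 1 then (1:F) else 0)) with hAdef
  -- B = A + C is upper triangular with diagonal d
  set B : Matrix (Fin (m+1)) (Fin (m+1)) F := A + C with hBdef
  have hBut : ∀ i j : Fin (m+1), j < i → B i j = 0 := by
    intro i j hij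
    have hjne : j ≠ Fin.last m := by
      intro h; rw [h] at hij; exact absurd hij (Fin.le_last i).not_gt
    have hine : i ≠ j := fun h => absurd (h ▸ hij) (lt_irrefl _)
    simp only [hBdef, Matrix.add_apply, hAdef, Matrix.of_apply, hCcol j hjne i]
    rw [if_neg hine]
    by_cases h : i = j + 1
    · rw [if_pos ⟨hjne, h⟩, if_pos h, zero_add, htwo]
    · rw [if_neg (fun hc => h hc.2), if_neg h]
      simp
  have hBdiag : ∀ i, B i i = d i := by
    intro i
    by_cases hi : i = Fin.last m
    · simp only [hBdef, Matrix.add_apply, hAdef, Matrix.of_apply]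
      rw [hi, hClast]
      simp
    · simp only [hBdef, Matrix.add_apply, hAdef, Matrix.of_apply, hCcol i hi i]
      simp [hne_succ i hi]
  -- Aᵀ is upper triangular with diagonal d
  have hAtut : ∀ i j : Fin (m+1), j < i → Aᵀ i j = 0 := by
    intro i j hij
    have hjne : j ≠ i := fun h => absurd (h ▸ hij) (lt_irrefl _)
    simp only [Matrix.transpose_apply, hAdef, Matrix.of_apply]
    rw [if_neg hjne]
    have hno : ¬ (i ≠ Fin.last m ∧ j = i + 1) := by
      rintro ⟨hine, h⟩
      have h1 : i < i + 1 := Fin.lt_add_one_iff.mpr (Fin.lt_last_iff_ne_last.mpr hine)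
      rw [← h] at h1
      exact absurd (hij.trans h1) (lt_irrefl _)
    rw [if_neg hno]
    simp
  have hAtdiag : ∀ i, Aᵀ i i = d i := by
    intro i
    simp only [Matrix.transpose_apply, hAdef, Matrix.of_apply]
    by_cases hi : i = Fin.last m
    · simp [hi]
    · simp [hne_succ i hi]
  obtain ⟨U₁, hU₁, hBU₁⟩ := exists_conj_diagonal B d hd hBut hBdiag
  obtain ⟨U₂, hU₂, hAU₂⟩ := exists_conj_diagonal Aᵀ d hd hAtut hAtdiag
  haveI : Invertible U₁ := Classical.choice hU₁.nonempty_invertible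
  haveI : Invertible U₂ := Classical.choice hU₂.nonempty_invertible
  set S := U₁ * ⅟U₂ with hSdef
  set Sinv := U₂ * ⅟U₁ with hSinvdef
  have hSinvS : Sinv * S = 1 := by
    rw [hSinvdef, hSdef, Matrix.mul_assoc, ← Matrix.mul_assoc (⅟U₁) U₁ (⅟U₂),
      invOf_mul_self, Matrix.one_mul, mul_invOf_self]
  have hSAS : S * Aᵀ * Sinv = B := by
    have hB : B = U₁ * Matrix.diagonal d * ⅟U₁ := by
      rw [← hBU₁, Matrix.mul_assoc, mul_invOf_self, Matrix.mul_one]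
    have hA : Aᵀ = U₂ * Matrix.diagonal d * ⅟U₂ := by
      rw [← hAU₂, Matrix.mul_assoc, mul_invOf_self, Matrix.mul_one]
    rw [hSdef, hSinvdef, hA, hB]
    simp only [Matrix.mul_assoc]
    rw [← Matrix.mul_assoc (⅟U₂) U₂, invOf_mul_self, Matrix.one_mul]
    rw [← Matrix.mul_assoc (⅟U₂) U₂, invOf_mul_self, Matrix.one_mul]
  have hABC : A + B = C := by
    ext i j
    simp only [Matrix.add_apply, hBdef, Matrix.add_apply]
    rw [← add_assoc, htwo (A i j), zero_add]
  refine ⟨V * S * Vᵀ, (⅟V)ᵀ * Aᵀ * Sinv * ⅟V, ?_⟩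
  have h1 : Vᵀ * (⅟V)ᵀ = 1 := by rw [← Matrix.transpose_mul, invOf_mul_self, Matrix.transpose_one]
  have h2 : Sᵀ * Sinvᵀ = 1 := by rw [← Matrix.transpose_mul, hSinvS, Matrix.transpose_one]
  have hPQ : (V * S * Vᵀ) * ((⅟V)ᵀ * Aᵀ * Sinv * ⅟V) = V * B * ⅟V := by
    calc (V * S * Vᵀ) * ((⅟V)ᵀ * Aᵀ * Sinv * ⅟V)
        = ((V * S) * (Vᵀ * (⅟V)ᵀ)) * (Aᵀ * (Sinv * ⅟V)) := by
          simp only [Matrix.mul_assoc]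
      _ = (V * S) * (Aᵀ * (Sinv * ⅟V)) := by rw [h1, Matrix.mul_one]
      _ = V * (S * Aᵀ * Sinv) * ⅟V := by simp only [Matrix.mul_assoc]
      _ = V * B * ⅟V := by rw [hSAS]
  have hPQt : (V * S * Vᵀ)ᵀ * ((⅟V)ᵀ * Aᵀ * Sinv * ⅟V)ᵀ = V * A * ⅟V := by
    have hPt : (V * S * Vᵀ)ᵀ = V * Sᵀ * Vᵀ := by
      simp [Matrix.transpose_mul, Matrix.mul_assoc]
    have hQt : ((⅟V)ᵀ * Aᵀ * Sinv * ⅟V)ᵀ = (⅟V)ᵀ * Sinvᵀ * A * ⅟V := by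
      simp [Matrix.transpose_mul, Matrix.mul_assoc]
    rw [hPt, hQt]
    calc (V * Sᵀ * Vᵀ) * ((⅟V)ᵀ * Sinvᵀ * A * ⅟V)
        = ((V * Sᵀ) * (Vᵀ * (⅟V)ᵀ)) * (Sinvᵀ * (A * ⅟V)) := by
          simp only [Matrix.mul_assoc]
      _ = (V * Sᵀ) * (Sinvᵀ * (A * ⅟V)) := by rw [h1, Matrix.mul_one]
      _ = V * ((Sᵀ * Sinvᵀ) * (A * ⅟V)) := by simp only [Matrix.mul_assoc]
      _ = V * A * ⅟V := by rw [h2, Matrix.one_mul, Matrix.mul_assoc]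
  rw [hPQ, hPQt, ← Matrix.add_mul, ← Matrix.mul_add, add_comm B A, hABC]
  rw [hCdef, ← Matrix.mul_assoc, ← Matrix.mul_assoc, mul_invOf_self, Matrix.one_mul,
    Matrix.mul_assoc, mul_invOf_self, Matrix.mul_one]

/-- Over an algebraically closed field of characteristic 2, the set
`{PQ + PᵀQᵀ : P, Q ∈ gl_n}` is Zariski-dense in `sl_n`: any polynomial function on
`gl_n` vanishing on all matrices of the form `PQ + PᵀQᵀ` vanishes on all trace-zero
matrices. -/
theorem dense_in_sl_of_char_two {K : Type*} [Field K] [IsAlgClosed K]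
    (hchar : ringChar K = 2) (n : ℕ)
    (f : MvPolynomial (Fin n × Fin n) K)
    (hf : ∀ P Q : Matrix (Fin n) (Fin n) K,
      MvPolynomial.eval (fun p => (P * Q + Pᵀ * Qᵀ) p.1 p.2) f = 0) :
    ∀ M : Matrix (Fin n) (Fin n) K, M.trace = 0 →
      MvPolynomial.eval (fun p => M p.1 p.2) f = 0 := by
  intro M hM
  haveI : CharP K 2 := hchar ▸ ringChar.charP K
  have htwoK : (2 : K) = 0 := by exact_mod_cast CharP.cast_eq_zero K 2
  have haddK : ∀ a : K, a + a = 0 := fun a => by rw [← two_mul, htwoK, zero_mul]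
  rcases n with - | m
  · -- n = 0
    have h0 : (fun p : Fin 0 × Fin 0 => M p.1 p.2)
        = (fun p : Fin 0 × Fin 0 =>
            ((0 : Matrix (Fin 0) (Fin 0) K) * (0 : Matrix (Fin 0) (Fin 0) K) +
             (0 : Matrix (Fin 0) (Fin 0) K)ᵀ * (0 : Matrix (Fin 0) (Fin 0) K)ᵀ) p.1 p.2) := by
      funext p; exact p.1.elim0
    rw [h0]
    exact hf 0 0
  -- n = m + 1
  let ι := Fin (m+1) × Fin (m+1)
  let R := MvPolynomial ι K
  let F := FractionRing R
  set lastp : ι := (Fin.last m, Fin.last m) with hlastp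
  set σp : R := ∑ t : Fin m, MvPolynomial.X (t.castSucc, t.castSucc) with hσp
  set XRfun : ι → R := fun p => if p = lastp then σp else MvPolynomial.X p with hXRfun
  set XM : Matrix (Fin (m+1)) (Fin (m+1)) R := Matrix.of (fun i j => XRfun (i,j)) with hXM
  set φRF : R →+* F := algebraMap R F with hφRF
  set φKF : K →+* F := φRF.comp (algebraMap K R) with hφKF
  set X : Matrix (Fin (m+1)) (Fin (m+1)) F := XM.map φRF with hX
  -- char two in R and F
  have htwoR : (2 : R) = 0 := by
    have : (2 : R) = MvPolynomial.C (2:K) := by rw [map_ofNat]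
    rw [this, htwoK, map_zero]
  have haddR : ∀ a : R, a + a = 0 := fun a => by rw [← two_mul, htwoR, zero_mul]
  have haddF : ∀ a : F, a + a = 0 := fun a => by
    rw [← two_mul, show (2:F) = φKF 2 from (map_ofNat φKF 2).symm, htwoK, map_zero, zero_mul]
  -- trace of XM
  have htrXM : XM.trace = 0 := by
    have : XM.trace = ∑ i : Fin (m+1), XRfun (i,i) := rfl
    rw [this, Fin.sum_univ_castSucc]
    have h1 : ∀ t : Fin m, XRfun (t.castSucc, t.castSucc)
        = MvPolynomial.X (t.castSucc, t.castSucc) := by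
      intro t
      rw [hXRfun]
      simp only [hlastp]
      rw [if_neg]
      intro h
      exact absurd (congrArg Prod.fst h) (Fin.castSucc_lt_last t).ne
    rw [Finset.sum_congr rfl (fun t _ => h1 t)]
    have h2 : XRfun (Fin.last m, Fin.last m) = σp := by rw [hXRfun]; simp [hlastp]
    rw [h2, ← hσp, haddR]
  have htrX : X.trace = 0 := by
    have h1 : X.trace = φRF XM.trace := by
      rw [hX]
      show ∑ i, φRF (XM i i) = φRF (∑ i, XM i i)
      rw [map_sum]
    rw [h1, htrXM, map_zero]
  -- the shift specialization
  set Lmat : Matrix (Fin (m+1)) (Fin (m+1)) K :=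
    Matrix.of (fun i j => if (i:ℕ) = (j:ℕ) + 1 then (1:K) else 0) with hLmat
  have hLpow : ∀ (k : ℕ) (i j : Fin (m+1)),
      (Lmat ^ k) i j = if (i:ℕ) = (j:ℕ) + k then 1 else 0 := by
    intro k
    induction k with
    | zero =>
      intro i j
      simp [Matrix.one_apply, Fin.ext_iff]
    | succ k ih =>
      intro i j
      rw [pow_succ, Matrix.mul_apply]
      by_cases hj : (j:ℕ) + 1 ≤ m
      · set t0 : Fin (m+1) := ⟨(j:ℕ)+1, by omega⟩ with ht0
        rw [Finset.sum_eq_single t0]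
        · rw [ih i t0]
          have hval : (t0:ℕ) = (j:ℕ)+1 := rfl
          have heq : (j:ℕ) + 1 + k = (j:ℕ) + (k+1) := by omega
          simp [hLmat, hval, heq]
        · intro t _ ht
          have hne : ¬ ((t:ℕ) = (j:ℕ) + 1) := by
            intro h; apply ht; rw [ht0]; exact Fin.ext h
          rw [hLmat]; simp only [Matrix.of_apply]; rw [if_neg hne, mul_zero]
        · intro h; exact absurd (Finset.mem_univ t0) h
      · have hz : ∀ t : Fin (m+1), (Lmat ^ k) i t * Lmat t j = 0 := by
          intro t
          have hlt := t.isLt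
          have hne : ¬ ((t:ℕ) = (j:ℕ) + 1) := by omega
          rw [hLmat]; simp only [Matrix.of_apply]; rw [if_neg hne, mul_zero]
        rw [Finset.sum_congr rfl (fun t _ => hz t), Finset.sum_const_zero]
        have hlt := i.isLt
        have hlt2 := j.isLt
        rw [if_neg (by omega)]
  set VR : Matrix (Fin (m+1)) (Fin (m+1)) R :=
    Matrix.of (fun i k => (XM ^ (k:ℕ)) i 0) with hVR
  set εL : R →+* K := (MvPolynomial.eval (fun p : ι => Lmat p.1 p.2)) with hεL
  have hXL : XM.map εL = Lmat := by
    ext i j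
    simp only [Matrix.map_apply, hXM, Matrix.of_apply, hXRfun]
    by_cases hp : ((i,j) : ι) = lastp
    · rw [if_pos hp, hσp, map_sum]
      have hij : i = Fin.last m ∧ j = Fin.last m :=
        ⟨congrArg Prod.fst hp, congrArg Prod.snd hp⟩
      have hterm : ∀ t : Fin m, εL (MvPolynomial.X (t.castSucc, t.castSucc)) = 0 := by
        intro t
        rw [hεL, MvPolynomial.eval_X, hLmat]
        simp only [Matrix.of_apply]
        rw [if_neg (by omega)]
      rw [Finset.sum_congr rfl (fun t _ => hterm t), Finset.sum_const_zero, hLmat]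
      simp only [Matrix.of_apply]
      rw [hij.1, hij.2]
      rw [if_neg (by omega)]
    · rw [if_neg hp, hεL, MvPolynomial.eval_X]
  have hdetVR1 : εL VR.det = 1 := by
    rw [RingHom.map_det]
    have h1 : VR.map εL = 1 := by
      ext i k
      simp only [Matrix.map_apply, hVR, Matrix.of_apply]
      have hpow : (XM ^ (k:ℕ)).map εL = Lmat ^ (k:ℕ) := by
        rw [← hXL]
        have h := map_pow (εL.mapMatrix) XM (k:ℕ)
        simpa [RingHom.mapMatrix_apply] using h
      have h2 : εL ((XM ^ (k:ℕ)) i 0) = (Lmat ^ (k:ℕ)) i 0 := by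
        rw [← hpow]; rfl
      rw [h2, hLpow]
      simp [Matrix.one_apply, Fin.ext_iff, eq_comm]
    rw [RingHom.mapMatrix_apply, h1, Matrix.det_one]
  have hdetVRne : VR.det ≠ 0 := fun h => by
    rw [h, map_zero] at hdetVR1; exact zero_ne_one hdetVR1
  have hVX : IsUnit ((Matrix.of (fun i k => (X ^ (k : ℕ)) i 0) :
      Matrix (Fin (m+1)) (Fin (m+1)) F).det) := by
    have hXpow : ∀ k : ℕ, X ^ k = (XM ^ k).map φRF := by
      intro k
      rw [hX]
      have h := map_pow (φRF.mapMatrix) XM k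
      simpa [RingHom.mapMatrix_apply] using h.symm
    have h1 : (Matrix.of (fun i k => (X ^ (k:ℕ)) i 0) :
        Matrix (Fin (m+1)) (Fin (m+1)) F) = VR.map φRF := by
      ext i k
      rw [Matrix.of_apply, hXpow]
      rfl
    rw [h1, ← RingHom.mapMatrix_apply, ← RingHom.map_det, isUnit_iff_ne_zero]
    intro h
    exact hdetVRne (IsFractionRing.injective R F (by rw [h, map_zero]))
  -- distinct scalars
  set emb := Infinite.natEmbedding K with hemb
  set d : Fin (m+1) → F := fun i => φKF (emb (i:ℕ)) with hd
  have hdinj : Function.Injective d := by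
    intro a b h
    apply Fin.val_injective
    apply emb.injective
    exact φKF.injective h
  obtain ⟨P₀, Q₀, hPQ₀⟩ := key_construction haddF X htrX hVX d hdinj
  -- the composed polynomial
  set g : ι → MvPolynomial (ι ⊕ ι) K := fun p =>
    ∑ k : Fin (m+1), (MvPolynomial.X (Sum.inl (p.1, k)) * MvPolynomial.X (Sum.inr (k, p.2))
      + MvPolynomial.X (Sum.inl (k, p.1)) * MvPolynomial.X (Sum.inr (p.2, k))) with hg
  have hcomp : ∀ (S : Type _) [CommSemiring S], ∀ (φ : K →+* S) (z : ι ⊕ ι → S),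
      MvPolynomial.eval₂ φ z (MvPolynomial.eval₂ MvPolynomial.C g f)
        = MvPolynomial.eval₂ φ (fun p : ι => ∑ k : Fin (m+1),
            (z (Sum.inl (p.1, k)) * z (Sum.inr (k, p.2))
              + z (Sum.inl (k, p.1)) * z (Sum.inr (p.2, k)))) f := by
    intro S _ φ z
    have h1 : MvPolynomial.eval₂ φ z (MvPolynomial.eval₂ MvPolynomial.C g f)
        = (MvPolynomial.eval₂Hom φ z) (MvPolynomial.eval₂ MvPolynomial.C g f) := rfl
    rw [h1, MvPolynomial.eval₂_comp_left (MvPolynomial.eval₂Hom φ z) MvPolynomial.C g f]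
    congr 1
    · ext a; simp
    · funext p
      show (MvPolynomial.eval₂Hom φ z) (g p) = _
      rw [hg]
      rw [map_sum]
      refine Finset.sum_congr rfl fun k _ => ?_
      rw [map_add, _root_.map_mul, _root_.map_mul,
        MvPolynomial.eval₂Hom_X', MvPolynomial.eval₂Hom_X',
        MvPolynomial.eval₂Hom_X', MvPolynomial.eval₂Hom_X']
  have hΦ0 : MvPolynomial.eval₂ MvPolynomial.C g f = 0 := by
    apply MvPolynomial.funext (q := 0)
    intro z
    rw [map_zero]
    have h1 : MvPolynomial.eval z (MvPolynomial.eval₂ MvPolynomial.C g f)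
        = MvPolynomial.eval₂ (RingHom.id K) (fun p : ι => ∑ k : Fin (m+1),
            (z (Sum.inl (p.1, k)) * z (Sum.inr (k, p.2))
              + z (Sum.inl (k, p.1)) * z (Sum.inr (p.2, k)))) f := hcomp K (RingHom.id K) z
    rw [h1]
    set P : Matrix (Fin (m+1)) (Fin (m+1)) K := Matrix.of (fun i j => z (Sum.inl (i, j))) with hP
    set Q : Matrix (Fin (m+1)) (Fin (m+1)) K := Matrix.of (fun i j => z (Sum.inr (i, j))) with hQ
    have h2 : (fun p : ι => ∑ k : Fin (m+1),
            (z (Sum.inl (p.1, k)) * z (Sum.inr (k, p.2))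
              + z (Sum.inl (k, p.1)) * z (Sum.inr (p.2, k))))
        = (fun p : ι => (P * Q + Pᵀ * Qᵀ) p.1 p.2) := by
      funext p
      simp [hP, hQ, Matrix.mul_apply, Matrix.add_apply, Matrix.transpose_apply,
        Finset.sum_add_distrib]
    rw [h2, MvPolynomial.eval₂_id]
    exact hf P Q
  -- evaluation at the F-point
  set z₀ : ι ⊕ ι → F := Sum.elim (fun p => P₀ p.1 p.2) (fun p => Q₀ p.1 p.2) with hz₀
  have h2 : MvPolynomial.eval₂ φKF (fun p : ι => X p.1 p.2) f = 0 := by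
    have h3 := hcomp F φKF z₀
    rw [hΦ0, MvPolynomial.eval₂_zero] at h3
    have h4 : (fun p : ι => ∑ k : Fin (m+1),
            (z₀ (Sum.inl (p.1, k)) * z₀ (Sum.inr (k, p.2))
              + z₀ (Sum.inl (k, p.1)) * z₀ (Sum.inr (p.2, k))))
        = fun p : ι => X p.1 p.2 := by
      funext p
      rw [hPQ₀]
      simp [hz₀, Matrix.mul_apply, Matrix.add_apply, Matrix.transpose_apply,
        Finset.sum_add_distrib]
    rw [h4] at h3
    exact h3.symm
  -- pull back to R
  have h5 : MvPolynomial.eval₂ (algebraMap K R) XRfun f = 0 := by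
    apply IsFractionRing.injective R F
    rw [map_zero]
    have h6 : φRF (MvPolynomial.eval₂ (algebraMap K R) XRfun f)
        = MvPolynomial.eval₂ (φRF.comp (algebraMap K R)) (⇑φRF ∘ XRfun) f :=
      MvPolynomial.eval₂_comp_left φRF (algebraMap K R) XRfun f
    rw [h6, ← hφKF]
    have h7 : (⇑φRF ∘ XRfun) = fun p : ι => X p.1 p.2 := by
      funext p
      rw [hX]
      show φRF (XRfun p) = φRF (XM p.1 p.2)
      rw [hXM]
      simp only [Matrix.of_apply]
      rfl
    rw [h7]
    exact h2
  -- evaluate at M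
  have h8 := congrArg (MvPolynomial.eval (fun p : ι => M p.1 p.2)) h5
  rw [map_zero] at h8
  have h9 : (MvPolynomial.eval (fun p : ι => M p.1 p.2) : R →+* K)
      (MvPolynomial.eval₂ (algebraMap K R) XRfun f)
      = MvPolynomial.eval₂
          ((MvPolynomial.eval (fun p : ι => M p.1 p.2) : R →+* K).comp (algebraMap K R))
          (⇑(MvPolynomial.eval (fun p : ι => M p.1 p.2)) ∘ XRfun) f :=
    MvPolynomial.eval₂_comp_left _ (algebraMap K R) XRfun f
  rw [h9] at h8
  have h10 : ((MvPolynomial.eval (fun p : ι => M p.1 p.2) : R →+* K).comp (algebraMap K R))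
      = RingHom.id K := by
    ext a
    have : (algebraMap K R) a = MvPolynomial.C a := rfl
    rw [RingHom.comp_apply, this, MvPolynomial.eval_C, RingHom.id_apply]
  have h11 : (⇑(MvPolynomial.eval (fun p : ι => M p.1 p.2)) ∘ XRfun)
      = fun p : ι => M p.1 p.2 := by
    funext p
    simp only [Function.comp_apply, hXRfun]
    by_cases hp : p = lastp
    · rw [if_pos hp, hp, hσp, map_sum]
      have hterm : ∀ t : Fin m, MvPolynomial.eval (fun p : ι => M p.1 p.2)
          (MvPolynomial.X (t.castSucc, t.castSucc)) = M t.castSucc t.castSucc := by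
        intro t; rw [MvPolynomial.eval_X]
      rw [Finset.sum_congr rfl (fun t _ => hterm t)]
      have hsum : ∑ t : Fin m, M t.castSucc t.castSucc + M (Fin.last m) (Fin.last m) = 0 := by
        rw [← Fin.sum_univ_castSucc (f := fun i => M i i)]
        exact hM
      have hself := haddK (M (Fin.last m) (Fin.last m))
      have : ∑ t : Fin m, M t.castSucc t.castSucc = M (Fin.last m) (Fin.last m) := by
        linear_combination hsum - hself
      rw [this, hlastp]
    · rw [if_neg hp, MvPolynomial.eval_X]
  rw [h10, h11] at h8
  rw [MvPolynomial.eval₂_id] at h8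
  exact h8
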